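/- Unisolvence of the vertex degrees of freedom for the low-order virtual element space: let U ⊆ ℝ² be a bounded open set whose frontier is the union of finitely many closed segments [Vᵢ, V_{i+1}] (indices modulo n) joining its vertices V₀, …, V_{n−1}. Suppose v : ℝ² → ℝ is continuous on the closure of U, harmonic on U, agrees on each boundary segment [Vᵢ, V_{i+1}] with some affine function, and satisfies v(Vᵢ) = 0 for every vertex Vᵢ. Then v = 0 on the closure of U. -/

import Mathlib

open Filter Set Metric Topology

/-- A function `v : ℝ² → ℝ` is harmonic on an open set `U` if it is twice
continuously differentiable on `U` and its second partial derivatives in the two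
coordinate directions sum to zero at every point of `U`. -/
def HarmonicOn2D (v : ℝ × ℝ → ℝ) (U : Set (ℝ × ℝ)) : Prop :=
  ContDiffOn ℝ 2 v U ∧
    ∀ p ∈ U,
      deriv (fun x => deriv (fun x' => v (x', p.2)) x) p.1
        + deriv (fun y => deriv (fun y' => v (p.1, y')) y) p.2 = 0

/-- Second derivative test: at an interior local max of a C² function, f'' ≤ 0. -/
lemma secondDeriv_nonpos_of_isLocalMax {f : ℝ → ℝ} {s : Set ℝ} (hs : IsOpen s) {a : ℝ}
    (ha : a ∈ s) (hf : ContDiffOn ℝ 2 f s) (hmax : IsLocalMax f a) :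
    deriv (deriv f) a ≤ 0 := by
  by_contra hlt
  push_neg at hlt
  set g := deriv f with hg
  have hg1 : ContDiffOn ℝ 1 g s := hf.deriv_of_isOpen hs (by norm_num)
  have hgd : DifferentiableAt ℝ g a :=
    (hg1.differentiableOn (by norm_num) a ha).differentiableAt (hs.mem_nhds ha)
  have hga : g a = 0 := hmax.deriv_eq_zero
  have hslope : Tendsto (slope g a) (𝓝[≠] a) (𝓝 (deriv g a)) :=
    hasDerivAt_iff_tendsto_slope.1 hgd.hasDerivAt
  have h1 : ∀ᶠ x in 𝓝[>] a, 0 < slope g a x := by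
    have hmono : 𝓝[>] a ≤ 𝓝[≠] a :=
      nhdsWithin_mono a (fun x hx => ne_of_gt hx)
    exact (hslope.mono_left hmono).eventually (eventually_gt_nhds hlt)
  have h2 : ∀ᶠ x in 𝓝[>] a, 0 < g x := by
    filter_upwards [h1, self_mem_nhdsWithin] with x hx hx'
    rw [slope_def_field, hga, sub_zero, div_pos_iff] at hx
    rcases hx with ⟨h, _⟩ | ⟨_, h⟩
    · exact h
    · exfalso; simp only [Set.mem_Ioi] at hx'; linarith
  have h3 : ∀ᶠ x in 𝓝[>] a, x ∈ s :=
    Filter.Eventually.filter_mono nhdsWithin_le_nhds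
      ((hs.mem_nhds ha) : ∀ᶠ x in 𝓝 a, x ∈ s)
  have h4 : ∀ᶠ x in 𝓝[>] a, f x ≤ f a :=
    Filter.Eventually.filter_mono nhdsWithin_le_nhds hmax
  obtain ⟨b, hb, hsub⟩ := mem_nhdsGT_iff_exists_Ioo_subset.1 ((h2.and (h3.and h4)) :)
  simp only [Set.mem_Ioi] at hb
  set c := (a + b) / 2 with hc
  have hac : a < c := by simp [hc]; linarith
  have hcb : c < b := by simp [hc]; linarith
  have hIccs : Set.Icc a c ⊆ s := by
    intro x hx
    rcases eq_or_lt_of_le hx.1 with h | h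
    · exact h ▸ ha
    · exact (hsub ⟨h, lt_of_le_of_lt hx.2 hcb⟩).2.1
  have hmono : StrictMonoOn f (Set.Icc a c) := by
    apply strictMonoOn_of_deriv_pos (convex_Icc a c) (hf.continuousOn.mono hIccs)
    intro x hx
    rw [interior_Icc] at hx
    exact (hsub ⟨hx.1, lt_trans hx.2 hcb⟩).1
  have hfc : f a < f c := hmono ⟨le_refl a, le_of_lt hac⟩ ⟨le_of_lt hac, le_refl c⟩ hac
  have : f c ≤ f a := (hsub ⟨hac, hcb⟩).2.2
  linarith

/-- Slice lemma: if `x ↦ f x + ε x²` has a local max at an interior point of a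
set where `f` is C², then `f''(a) + 2ε ≤ 0`. -/
lemma slice_ineq {f : ℝ → ℝ} {s : Set ℝ} (hs : IsOpen s) {a : ℝ} (ha : a ∈ s)
    (hf : ContDiffOn ℝ 2 f s) {ε : ℝ}
    (hmax : IsLocalMax (fun x => f x + ε * x ^ 2) a) :
    deriv (deriv f) a + 2 * ε ≤ 0 := by
  set F := fun x => f x + ε * x ^ 2 with hF
  have hFc : ContDiffOn ℝ 2 F s :=
    hf.add ((contDiff_const.mul (contDiff_id.pow 2)).contDiffOn)
  have hdd : deriv (deriv F) a ≤ 0 := secondDeriv_nonpos_of_isLocalMax hs ha hFc hmax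
  have hev : ∀ᶠ x in 𝓝 a, deriv F x = deriv f x + ε * (2 * x) := by
    filter_upwards [hs.mem_nhds ha] with x hx
    have hdf : DifferentiableAt ℝ f x :=
      ((hf.differentiableOn (by norm_num)) x hx).differentiableAt (hs.mem_nhds hx)
    have hq : HasDerivAt (fun y : ℝ => ε * y ^ 2) (ε * (2 * x)) x := by
      simpa using (hasDerivAt_pow 2 x).const_mul ε
    rw [hF, deriv_fun_add hdf hq.differentiableAt, hq.deriv]
  have hdF : deriv (deriv F) a = deriv (fun x => deriv f x + ε * (2 * x)) a :=
    Filter.EventuallyEq.deriv_eq hev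
  have hdf2 : DifferentiableAt ℝ (deriv f) a :=
    (((hf.deriv_of_isOpen hs (by norm_num) : ContDiffOn ℝ 1 (deriv f) s).differentiableOn (by norm_num)) a ha).differentiableAt
      (hs.mem_nhds ha)
  have hlin : HasDerivAt (fun x : ℝ => ε * (2 * x)) (2 * ε) a := by
    have := (hasDerivAt_id a).const_mul (ε * 2)
    simpa [mul_assoc, mul_comm, mul_left_comm] using this
  rw [hdF, deriv_fun_add hdf2 hlin.differentiableAt, hlin.deriv] at hdd
  linarith

/-- One-sided maximum principle with the ε x² trick. -/
lemma max_principle {U : Set (ℝ × ℝ)} (hUo : IsOpen U) (hUb : Bornology.IsBounded U)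
    {v : ℝ × ℝ → ℝ} (hcont : ContinuousOn v (closure U)) (hharm : HarmonicOn2D v U)
    (hb : ∀ p ∈ frontier U, v p = 0) {B ε : ℝ} (hε : 0 < ε)
    (hB : ∀ p ∈ closure U, p.1 ^ 2 + p.2 ^ 2 ≤ B) :
    ∀ p ∈ closure U, v p ≤ ε * B := by
  intro p hp
  set w := fun q : ℝ × ℝ => v q + ε * (q.1 ^ 2 + q.2 ^ 2) with hw
  have hwc : ContinuousOn w (closure U) := by
    apply hcont.add
    exact (Continuous.continuousOn (by fun_prop))
  have hK : IsCompact (closure U) :=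
    Metric.isCompact_of_isClosed_isBounded isClosed_closure hUb.closure
  obtain ⟨m, hmcl, hmax⟩ := hK.exists_isMaxOn ⟨p, hp⟩ hwc
  have hkey : w p ≤ w m := hmax hp
  by_cases hmU : m ∈ U
  · exfalso
    obtain ⟨m1, m2⟩ := m
    have hC2 := hharm.1
    have hLap := hharm.2 (m1, m2) hmU
    -- x slice
    have hsx : IsOpen ((fun x : ℝ => (x, m2)) ⁻¹' U) :=
      hUo.preimage (continuous_id.prodMk continuous_const)
    have hm1 : m1 ∈ (fun x : ℝ => (x, m2)) ⁻¹' U := hmU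
    have hfx : ContDiffOn ℝ 2 (fun x => v (x, m2)) ((fun x : ℝ => (x, m2)) ⁻¹' U) :=
      hC2.comp ((contDiff_id.prodMk contDiff_const).contDiffOn) (fun x hx => hx)
    have hlmx : IsLocalMax (fun x => v (x, m2) + ε * x ^ 2) m1 := by
      filter_upwards [hsx.mem_nhds hm1] with x hx
      have h : w (x, m2) ≤ w (m1, m2) := hmax (subset_closure hx)
      simp only [hw] at h
      ring_nf at h ⊢
      linarith
    have hx2 := slice_ineq hsx hm1 hfx hlmx
    -- y slice
    have hsy : IsOpen ((fun y : ℝ => (m1, y)) ⁻¹' U) :=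
      hUo.preimage (continuous_const.prodMk continuous_id)
    have hm2 : m2 ∈ (fun y : ℝ => (m1, y)) ⁻¹' U := hmU
    have hfy : ContDiffOn ℝ 2 (fun y => v (m1, y)) ((fun y : ℝ => (m1, y)) ⁻¹' U) :=
      hC2.comp ((contDiff_const.prodMk contDiff_id).contDiffOn) (fun y hy => hy)
    have hlmy : IsLocalMax (fun y => v (m1, y) + ε * y ^ 2) m2 := by
      filter_upwards [hsy.mem_nhds hm2] with y hy
      have h : w (m1, y) ≤ w (m1, m2) := hmax (subset_closure hy)
      simp only [hw] at h
      ring_nf at h ⊢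
      linarith
    have hy2 := slice_ineq hsy hm2 hfy hlmy
    simp only at hLap
    linarith
  · have hmf : m ∈ frontier U := by
      rw [hUo.frontier_eq]; exact ⟨hmcl, hmU⟩
    have h1 : v m = 0 := hb m hmf
    have h2 : m.1 ^ 2 + m.2 ^ 2 ≤ B := hB m hmcl
    have h3 : 0 ≤ p.1 ^ 2 + p.2 ^ 2 := by positivity
    simp only [hw] at hkey
    nlinarith [hkey]

/-- unisolvence of the vertex degrees of freedom for the low-order
virtual element space.  If `U ⊆ ℝ²` is a bounded open set whose frontier is the union
of the closed segments `[Vᵢ, V_{i+1}]` (indices mod `n`), and `v` is continuous on the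
closure of `U`, harmonic on `U`, affine on each boundary segment, and vanishes at all
vertices, then `v = 0` on the closure of `U`. -/
theorem vem_low_order_unisolvence
    (n : ℕ) [NeZero n] (V : Fin n → ℝ × ℝ)
    (U : Set (ℝ × ℝ)) (hUo : IsOpen U) (hUb : Bornology.IsBounded U)
    (hfr : frontier U = ⋃ i : Fin n, segment ℝ (V i) (V (i + 1)))
    (v : ℝ × ℝ → ℝ)
    (hcont : ContinuousOn v (closure U))
    (hharm : HarmonicOn2D v U)
    (hedge : ∀ i : Fin n, ∃ (g : ℝ × ℝ) (c : ℝ),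
      ∀ p ∈ segment ℝ (V i) (V (i + 1)), v p = g.1 * p.1 + g.2 * p.2 + c)
    (hvert : ∀ i : Fin n, v (V i) = 0) :
    ∀ p ∈ closure U, v p = 0 := by
  -- v vanishes on the frontier
  have hbzero : ∀ p ∈ frontier U, v p = 0 := by
    intro p hp
    rw [hfr, Set.mem_iUnion] at hp
    obtain ⟨i, hpi⟩ := hp
    obtain ⟨g, c, hgc⟩ := hedge i
    have e1 : g.1 * (V i).1 + g.2 * (V i).2 + c = 0 := by
      rw [← hgc _ (left_mem_segment ℝ _ _)]; exact hvert i
    have e2 : g.1 * (V (i + 1)).1 + g.2 * (V (i + 1)).2 + c = 0 := by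
      rw [← hgc _ (right_mem_segment ℝ _ _)]; exact hvert (i + 1)
    rw [hgc _ hpi]
    obtain ⟨a, b, ha, hb, hab, rfl⟩ := hpi
    simp only [Prod.fst_add, Prod.snd_add, Prod.smul_fst, Prod.smul_snd, smul_eq_mul]
    linear_combination a * e1 + b * e2 - c * hab
  intro p hp
  -- bound for the square norm on the closure
  obtain ⟨r, hr⟩ := hUb.closure.subset_ball (0 : ℝ × ℝ)
  have hrp : 0 < r := by
    have := hr hp
    rw [mem_ball_zero_iff] at this
    exact lt_of_le_of_lt (norm_nonneg p) this
  set B := 2 * r ^ 2 with hBdef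
  have hBpos : 0 < B := by positivity
  have hB : ∀ q ∈ closure U, q.1 ^ 2 + q.2 ^ 2 ≤ B := by
    intro q hq
    have h := hr hq
    rw [mem_ball_zero_iff] at h
    have h1 : |q.1| ≤ ‖q‖ := by simpa [Real.norm_eq_abs] using norm_fst_le q
    have h2 : |q.2| ≤ ‖q‖ := by simpa [Real.norm_eq_abs] using norm_snd_le q
    nlinarith [abs_nonneg q.1, abs_nonneg q.2, sq_abs q.1, sq_abs q.2, norm_nonneg q]
  -- harmonicity of -v
  have hharmneg : HarmonicOn2D (fun q => -v q) U := by
    refine ⟨hharm.1.neg, fun q hq => ?_⟩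
    have h := hharm.2 q hq
    simp only [deriv.fun_neg]
    linarith
  have hbound : ∀ ε > (0 : ℝ), v p ≤ ε * B :=
    fun ε hε => max_principle hUo hUb hcont hharm hbzero hε hB p hp
  have hboundneg : ∀ ε > (0 : ℝ), -v p ≤ ε * B :=
    fun ε hε => max_principle hUo hUb hcont.neg hharmneg
      (fun q hq => by simp [hbzero q hq]) hε hB p hp
  have hBne : B ≠ 0 := ne_of_gt hBpos
  have h1 : v p ≤ 0 := by
    by_contra h
    push_neg at h
    have hthis := hbound (v p / (2 * B)) (by positivity)
    have hEq : v p / (2 * B) * B = v p / 2 := by field_simp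
    rw [hEq] at hthis
    linarith
  have h2 : -v p ≤ 0 := by
    by_contra h
    push_neg at h
    have hthis := hboundneg (-v p / (2 * B)) (by positivity)
    have hEq : -v p / (2 * B) * B = -v p / 2 := by field_simp
    rw [hEq] at hthis
    linarith
  linarith
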